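/- With A, B, C and ψ as in the construction: (i) ψ is a unit vector, ∑ u, ‖ψ u‖^2 = 1; (ii) for every nonempty subset J of the first three tensor factors, writing S_J for the sum of those matrices among A, B, C indexed by J and ρ_J for the reduced density matrix of |ψ⟩⟨ψ| on the factors in J (partial trace over the fourth factor and all factors outside J), one has Matrix.charpoly ρ_J = X^((d+1)^(J.card) − (d+1)) * (X − (1 − (S_J).trace)) * Matrix.charpoly S_J. In particular, the nonzero eigenvalues (with multiplicity) of ρ_ABC are (1 − tr(A+B+C)) together with the eigenvalues of A+B+C, those of ρ_AB are (1 − tr(A+B)) together with the eigenvalues of A+B, those of ρ_A are (1 − tr A) together with the eigenvalues of A, and likewise for all other marginals. -/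

import Mathlib

open scoped BigOperators
open ComplexOrder

open Classical in
/-- The largest eigenvalue `λmax` of a Hermitian matrix; junk value `0` for
non-Hermitian matrices. -/
noncomputable def lmaxM {m : Type*} [Fintype m] [DecidableEq m] (H : Matrix m m ℂ) : ℝ :=
  if h : H.IsHermitian then ⨆ i, h.eigenvalues i else 0

/-- Glue a tuple indexed by `I` with a tuple indexed by `Iᶜ` to a full tuple. -/
def glue {ι : Type*} {α : ι → Type*} [Fintype ι] [DecidableEq ι] (I : Finset ι)
    (x : (i : {j // j ∈ I}) → α i.1) (z : (i : {j // j ∈ Iᶜ}) → α i.1) :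
    (i : ι) → α i :=
  fun i => if h : i ∈ I then x ⟨i, h⟩ else z ⟨i, Finset.mem_compl.mpr h⟩

/-- The reduced density matrix on the sites in `I`: the partial trace over the
complementary factors. -/
noncomputable def ptrace {ι : Type*} {α : ι → Type*} [Fintype ι] [DecidableEq ι]
    [∀ i, Fintype (α i)] (I : Finset ι)
    (ρ : Matrix ((i : ι) → α i) ((i : ι) → α i) ℂ) :
    Matrix ((i : {j // j ∈ I}) → α i.1) ((i : {j // j ∈ I}) → α i.1) ℂ :=
  Matrix.of fun x y => ∑ z : (i : {j // j ∈ Iᶜ}) → α i.1, ρ (glue I x z) (glue I y z)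

/-- The rank-one projection `|ψ⟩⟨ψ|`. -/
def outer {m : Type*} (ψ : m → ℂ) : Matrix m m ℂ :=
  Matrix.of fun u v => ψ u * (starRingEnd ℂ) (ψ v)

/-- The positive semidefinite square root, as `Matrix.PosSemidef.sqrt` was defined. -/
noncomputable def Matrix.PosSemidef.sqrt {n : Type*} [Fintype n] [DecidableEq n]
    {A : Matrix n n ℂ} (hA : A.PosSemidef) : Matrix n n ℂ :=
  hA.1.eigenvectorUnitary.1 * Matrix.diagonal (((↑) : ℝ → ℂ) ∘ (fun x => Real.sqrt x) ∘ hA.1.eigenvalues) *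
    (star hA.1.eigenvectorUnitary : Matrix n n ℂ)

/-- The four-partite pure state `ψ` built from positive semidefinite matrices
`A`, `B`, `C`, identifying `Fin (d+1)` with `{0} ⊕ Fin d` via `Fin.succ`:
`ψ (i+1, 0, 0, l+1) = (√A) i l`, `ψ (0, j+1, 0, l+1) = (√B) j l`,
`ψ (0, 0, k+1, l+1) = (√C) k l`, `ψ (0,0,0,0) = √(1 - tr (A+B+C))`, and `0` otherwise. -/
noncomputable def purif {d : ℕ} {A B C : Matrix (Fin d) (Fin d) ℂ}
    (hA : A.PosSemidef) (hB : B.PosSemidef) (hC : C.PosSemidef)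
    (u : Fin (d + 1) × Fin (d + 1) × Fin (d + 1) × Fin (d + 1)) : ℂ :=
  if hi : u.1 = 0 then
    if hj : u.2.1 = 0 then
      if hk : u.2.2.1 = 0 then
        if _hl : u.2.2.2 = 0 then (Real.sqrt (1 - ((A + B + C).trace).re) : ℂ) else 0
      else
        if hl : u.2.2.2 = 0 then 0 else hC.sqrt (u.2.2.1.pred hk) (u.2.2.2.pred hl)
    else
      if _hk : u.2.2.1 = 0 then
        if hl : u.2.2.2 = 0 then 0 else hB.sqrt (u.2.1.pred hj) (u.2.2.2.pred hl)
      else 0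
  else
    if _hj : u.2.1 = 0 then
      if _hk : u.2.2.1 = 0 then
        if hl : u.2.2.2 = 0 then 0 else hA.sqrt (u.1.pred hi) (u.2.2.2.pred hl)
      else 0
    else 0

section Aux

open Polynomial Matrix Finset

lemma Matrix.PosSemidef.sqrt_isHermitian {n : Type*} [Fintype n] [DecidableEq n]
    {M : Matrix n n ℂ} (hM : M.PosSemidef) : hM.sqrt.IsHermitian := by
  unfold Matrix.PosSemidef.sqrt
  simp only [Matrix.IsHermitian, Matrix.conjTranspose_mul, Matrix.diagonal_conjTranspose,
    Matrix.star_eq_conjTranspose, Matrix.conjTranspose_conjTranspose, Matrix.mul_assoc]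
  congr 3
  funext i
  simp

lemma Matrix.PosSemidef.sqrt_mul_self {n : Type*} [Fintype n] [DecidableEq n]
    {M : Matrix n n ℂ} (hM : M.PosSemidef) : hM.sqrt * hM.sqrt = M := by
  conv_rhs => rw [hM.1.spectral_theorem]
  unfold Matrix.PosSemidef.sqrt
  have hU : (star hM.1.eigenvectorUnitary : Matrix n n ℂ) * hM.1.eigenvectorUnitary.1 = 1 :=
    Unitary.coe_star_mul_self _
  simp only [Unitary.conjStarAlgAut_apply, Matrix.mul_assoc]
  rw [← Matrix.mul_assoc (star _ : Matrix n n ℂ), hU, Matrix.one_mul,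
    ← Matrix.mul_assoc (Matrix.diagonal _), Matrix.diagonal_mul_diagonal]
  congr 3
  ext i
  simp only [Function.comp_apply]
  rw [← Complex.ofReal_mul, Real.mul_self_sqrt (hM.eigenvalues_nonneg i)]
  rfl


/-- `X^|n| charpoly (MN) = X^|m| charpoly (NM)` for rectangular `M`, `N`. -/
lemma charpoly_pow_mul_comm {m n : Type*} {R : Type*} [CommRing R]
    [Fintype m] [Fintype n] [DecidableEq m] [DecidableEq n]
    (M : Matrix m n R) (N : Matrix n m R) :
    X ^ (Fintype.card n) * (M * N).charpoly = X ^ (Fintype.card m) * (N * M).charpoly := by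
  set Mc : Matrix m n R[X] := M.map C with hMc
  set Nc : Matrix n m R[X] := N.map C with hNc
  have hc1 : (M * N).charpoly = ((X : R[X]) • (1 : Matrix m m R[X]) - Mc * Nc).det := by
    rw [Matrix.charpoly, charmatrix, RingHom.mapMatrix_apply, Matrix.map_mul,
      scalar_apply, ← Matrix.smul_one_eq_diagonal]
  have hc2 : (N * M).charpoly = ((X : R[X]) • (1 : Matrix n n R[X]) - Nc * Mc).det := by
    rw [Matrix.charpoly, charmatrix, RingHom.mapMatrix_apply, Matrix.map_mul,
      scalar_apply, ← Matrix.smul_one_eq_diagonal]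
  set D1 : Matrix (m ⊕ n) (m ⊕ n) R[X] :=
    fromBlocks ((X : R[X]) • 1) Mc Nc 1 with hD1
  set D2 : Matrix (m ⊕ n) (m ⊕ n) R[X] :=
    fromBlocks 1 Mc Nc ((X : R[X]) • 1) with hD2
  have hdetD1 : D1.det = ((X : R[X]) • (1 : Matrix m m R[X]) - Mc * Nc).det := by
    have key : fromBlocks 1 (-Mc) 0 1 * D1 =
        fromBlocks ((X : R[X]) • (1 : Matrix m m R[X]) - Mc * Nc) 0 Nc 1 := by
      rw [hD1, fromBlocks_multiply]
      congr 1 <;> simp [sub_eq_add_neg]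
    have := congrArg Matrix.det key
    rw [Matrix.det_mul, Matrix.det_fromBlocks_zero₂₁, Matrix.det_fromBlocks_zero₁₂] at this
    simpa using this
  have hdetD2 : D2.det = ((X : R[X]) • (1 : Matrix n n R[X]) - Nc * Mc).det := by
    have key : fromBlocks 1 0 (-Nc) 1 * D2 =
        fromBlocks 1 Mc 0 ((X : R[X]) • (1 : Matrix n n R[X]) - Nc * Mc) := by
      rw [hD2, fromBlocks_multiply]
      congr 1 <;> simp [sub_eq_add_neg, add_comm]
    have := congrArg Matrix.det key
    rw [Matrix.det_mul, Matrix.det_fromBlocks_zero₁₂, Matrix.det_fromBlocks_zero₂₁] at this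
    simpa using this
  have hK : D1 * fromBlocks 1 0 0 ((X : R[X]) • 1) =
      fromBlocks ((X : R[X]) • 1) 0 0 (1 : Matrix n n R[X]) * D2 := by
    rw [hD1, hD2, fromBlocks_multiply, fromBlocks_multiply]
    congr 1 <;> simp [mul_smul_comm, smul_mul_assoc]
  have := congrArg Matrix.det hK
  rw [Matrix.det_mul, Matrix.det_mul, Matrix.det_fromBlocks_zero₂₁,
    Matrix.det_fromBlocks_zero₂₁] at this
  simp only [Matrix.det_one, Matrix.det_smul, one_mul, mul_one] at this
  rw [hc1, hc2, hdetD1.symm, hdetD2.symm]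
  rw [mul_comm (X ^ Fintype.card n), mul_comm (X ^ Fintype.card m)]
  simpa [mul_comm] using this

variable {κ : Type*} [Fintype κ] [DecidableEq κ] {d : ℕ}

/-- tuple supported at a single point, with a nonzero value there -/
def single1 (a : κ) (i : Fin d) : κ → Fin (d+1) := fun b => if b = a then i.succ else 0

omit [Fintype κ] in
lemma single1_injective : Function.Injective (fun p : κ × Fin d => single1 p.1 p.2) := by
  rintro ⟨a, i⟩ ⟨a', i'⟩ h
  by_cases hh : a = a'
  · subst hh
    have ha := congrFun h a
    simp only [single1, if_pos rfl] at ha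
    simp [Fin.succ_inj.mp ha]
  · have ha := congrFun h a
    simp only [single1, if_pos rfl, if_neg hh] at ha
    exact absurd ha (Fin.succ_ne_zero i)

lemma sum_pattern1 (F : (κ → Fin (d+1)) → ℂ)
    (hF : ∀ x : κ → Fin (d+1), (∃ a b, a ≠ b ∧ x a ≠ 0 ∧ x b ≠ 0) → F x = 0) :
    ∑ x : κ → Fin (d+1), F x = F 0 + ∑ a : κ, ∑ i : Fin d, F (single1 a i) := by
  classical
  set Φ : Option (κ × Fin d) → (κ → Fin (d+1)) :=
    fun y => y.elim 0 (fun p => single1 p.1 p.2) with hΦ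
  have hinj : Function.Injective Φ := by
    rintro (_|⟨a,i⟩) (_|⟨a',i'⟩) h
    · rfl
    · exact absurd (congrFun h a') (by simp [hΦ, single1, (Fin.succ_ne_zero i').symm])
    · exact absurd (congrFun h a) (by simp [hΦ, single1, Fin.succ_ne_zero])
    · exact congrArg some (single1_injective h)
  have hstep : ∑ x : κ → Fin (d+1), F x = ∑ x ∈ univ.image Φ, F x := by
    refine (sum_subset (subset_univ _) ?_).symm
    intro x _ hx
    refine hF x ?_
    by_contra hcon
    push_neg at hcon
    apply hx
    by_cases hx0 : ∀ a, x a = 0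
    · exact mem_image.mpr ⟨none, mem_univ _, funext fun b => (hx0 b).symm⟩
    · push_neg at hx0
      obtain ⟨a, ha⟩ := hx0
      refine mem_image.mpr ⟨some (a, (x a).pred ha), mem_univ _, funext fun b => ?_⟩
      simp only [hΦ, Option.elim, single1]
      by_cases hb : b = a
      · subst hb; simp
      · rw [if_neg hb]
        exact (hcon a b (fun h => hb h.symm) ha).symm
  rw [hstep, sum_image (fun y _ y' _ h => hinj h), Fintype.sum_option, Fintype.sum_prod_type]
  rfl

def zpat (t : κ) (l : Fin (d+1)) : κ → Fin (d+1) := fun c => if c = t then l else 0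

def zpat2 (t : κ) (a : κ) (i : Fin d) (l : Fin (d+1)) : κ → Fin (d+1) :=
  fun c => if c = a then i.succ else if c = t then l else 0

lemma sum_pattern2 (t : κ) (F : (κ → Fin (d+1)) → ℂ)
    (hF : ∀ z : κ → Fin (d+1),
      (∃ a b, a ≠ b ∧ a ≠ t ∧ b ≠ t ∧ z a ≠ 0 ∧ z b ≠ 0) → F z = 0) :
    ∑ z : κ → Fin (d+1), F z = ∑ l, F (zpat t l) +
      ∑ a : {b : κ // b ≠ t}, ∑ i : Fin d, ∑ l, F (zpat2 t a.1 i l) := by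
  classical
  set e := Equiv.funSplitAt t (Fin (d+1)) with he
  have hrec : ∀ (l : Fin (d+1)) (w : {b : κ // b ≠ t} → Fin (d+1)) (c : κ),
      e.symm (l, w) c = if h : c = t then l else w ⟨c, h⟩ := by
    intro l w c
    by_cases h : c = t
    · subst h
      simp [he, Equiv.funSplitAt, Equiv.piSplitAt]
    · simp [he, Equiv.funSplitAt, Equiv.piSplitAt, h]
  have hsum : ∑ z : κ → Fin (d+1), F z
      = ∑ p : Fin (d+1) × ({b : κ // b ≠ t} → Fin (d+1)), F (e.symm p) :=
    (Fintype.sum_equiv e.symm _ _ (fun _ => rfl)).symm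
  rw [hsum, Fintype.sum_prod_type]
  have hin : ∀ l : Fin (d+1),
      ∑ w : {b : κ // b ≠ t} → Fin (d+1), F (e.symm (l, w))
        = F (zpat t l) + ∑ a : {b : κ // b ≠ t}, ∑ i : Fin d, F (zpat2 t a.1 i l) := by
    intro l
    have key := sum_pattern1 (κ := {b : κ // b ≠ t}) (fun w => F (e.symm (l, w))) ?_
    · rw [key]
      have h0 : e.symm (l, (0 : {b : κ // b ≠ t} → Fin (d+1))) = zpat t l := by
        funext c
        rw [hrec]
        by_cases h : c = t <;> simp [h, zpat]
      have h1 : ∀ (a : {b : κ // b ≠ t}) (i : Fin d),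
          e.symm (l, single1 a i) = zpat2 t a.1 i l := by
        intro a i
        funext c
        rw [hrec]
        by_cases h : c = t
        · subst h
          simp [zpat2, Ne.symm a.2]
        · by_cases h2 : c = a.1
          · subst h2
            simp [zpat2, single1, h, Subtype.ext_iff]
          · simp [zpat2, single1, h, h2, Subtype.ext_iff]
      rw [h0]
      congr 1
      exact Finset.sum_congr rfl fun a _ => Finset.sum_congr rfl fun i _ => by rw [h1]
    · rintro w ⟨a, b, hab, hwa, hwb⟩
      refine hF _ ⟨a.1, b.1, fun h => hab (Subtype.ext h), a.2, b.2, ?_, ?_⟩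
      · rw [hrec]; simpa [a.2] using hwa
      · rw [hrec]; simpa [b.2] using hwb
  calc ∑ l, ∑ w, F (e.symm (l, w))
      = ∑ l, (F (zpat t l) + ∑ a : {b : κ // b ≠ t}, ∑ i : Fin d, F (zpat2 t a.1 i l)) :=
        Finset.sum_congr rfl fun l _ => hin l
    _ = _ := by
        rw [Finset.sum_add_distrib]
        congr 1
        rw [Finset.sum_comm]
        exact Finset.sum_congr rfl fun a _ => Finset.sum_comm

variable {A B C : Matrix (Fin d) (Fin d) ℂ}

/-- the state as a function of a 4-tuple -/
noncomputable def phi4 (hA : A.PosSemidef) (hB : B.PosSemidef) (hC : C.PosSemidef)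
    (f : Fin 4 → Fin (d+1)) : ℂ := purif hA hB hC (f 0, f 1, f 2, f 3)

def e4pat (b : Fin 4) (v : Fin (d+1)) (l : Fin (d+1)) : Fin 4 → Fin (d+1) :=
  fun c => if c = b then v else if c = 3 then l else 0

def z4pat (l : Fin (d+1)) : Fin 4 → Fin (d+1) := fun c => if c = 3 then l else 0

noncomputable def sq4 (hA : A.PosSemidef) (hB : B.PosSemidef) (hC : C.PosSemidef) :
    Fin 4 → Matrix (Fin d) (Fin d) ℂ := ![hA.sqrt, hB.sqrt, hC.sqrt, 0]

def mv4 (A B C : Matrix (Fin d) (Fin d) ℂ) : Fin 4 → Matrix (Fin d) (Fin d) ℂ := ![A, B, C, 0]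

variable (hA : A.PosSemidef) (hB : B.PosSemidef) (hC : C.PosSemidef)

lemma phi4_two_ne (f : Fin 4 → Fin (d+1)) (b c : Fin 4) (hbc : b ≠ c)
    (hb3 : b ≠ 3) (hc3 : c ≠ 3) (hfb : f b ≠ 0) (hfc : f c ≠ 0) :
    phi4 hA hB hC f = 0 := by
  fin_cases b <;> fin_cases c <;>
    simp_all [phi4, purif]

lemma phi4_z4 (l : Fin (d+1)) :
    phi4 hA hB hC (z4pat l) =
      if l = 0 then (Real.sqrt (1 - ((A + B + C).trace).re) : ℂ) else 0 := by
  by_cases hl : l = 0 <;> simp [phi4, purif, z4pat, hl]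

lemma phi4_e4 (b : Fin 4) (hb : b ≠ 3) (i : Fin d) (l : Fin (d+1)) :
    phi4 hA hB hC (e4pat b i.succ l) =
      if hl : l = 0 then 0 else sq4 hA hB hC b i (l.pred hl) := by
  fin_cases b
  · by_cases hl : l = 0 <;> simp [phi4, purif, e4pat, hl, Fin.succ_ne_zero, sq4]
  · by_cases hl : l = 0 <;> simp [phi4, purif, e4pat, hl, Fin.succ_ne_zero, sq4]
  · by_cases hl : l = 0 <;> simp [phi4, purif, e4pat, hl, Fin.succ_ne_zero, sq4]
  · exact absurd rfl hb

lemma sqrt_col_inner {M : Matrix (Fin d) (Fin d) ℂ} (hM : M.PosSemidef) (l l' : Fin d) :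
    ∑ i, (starRingEnd ℂ) (hM.sqrt i l) * hM.sqrt i l' = M l l' := by
  have hH : hM.sqrt.IsHermitian := hM.sqrt_isHermitian
  have : ∀ i, (starRingEnd ℂ) (hM.sqrt i l) = hM.sqrt l i := by
    intro i
    conv_rhs => rw [← hH]
    simp [Matrix.conjTranspose_apply]
  simp_rw [this]
  rw [← Matrix.mul_apply, hM.sqrt_mul_self]

lemma sqrt_row_inner {M : Matrix (Fin d) (Fin d) ℂ} (hM : M.PosSemidef) (p q : Fin d) :
    ∑ l, hM.sqrt p l * (starRingEnd ℂ) (hM.sqrt q l) = M p q := by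
  have hH : hM.sqrt.IsHermitian := hM.sqrt_isHermitian
  have : ∀ l, (starRingEnd ℂ) (hM.sqrt q l) = hM.sqrt l q := by
    intro l
    conv_rhs => rw [← hH]
    simp [Matrix.conjTranspose_apply]
  simp_rw [this]
  rw [← Matrix.mul_apply, hM.sqrt_mul_self]

lemma sqrt_trace {M : Matrix (Fin d) (Fin d) ℂ} (hM : M.PosSemidef) :
    ∑ i, ∑ l, hM.sqrt i l * (starRingEnd ℂ) (hM.sqrt i l) = M.trace := by
  rw [Matrix.trace]
  refine Finset.sum_congr rfl fun i _ => ?_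
  rw [sqrt_row_inner hM i i]
  rfl

lemma trace_re_psd {M : Matrix (Fin d) (Fin d) ℂ} (hM : M.PosSemidef) :
    ((M.trace.re : ℝ) : ℂ) = M.trace := by
  have him : ∀ i, (M i i).im = 0 := by
    intro i
    have h2 : M i i = (starRingEnd ℂ) (M i i) := by
      conv_lhs => rw [← hM.1]
      simp [Matrix.conjTranspose_apply]
    exact Complex.conj_eq_iff_im.mp h2.symm
  have htr : M.trace.im = 0 := by
    rw [Matrix.trace, Complex.im_sum]
    exact Finset.sum_eq_zero fun i _ => him i
  exact Complex.ext (by simp) (by simp [htr])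

lemma sq4_inner (b : Fin 4) (hb : b ≠ 3) (l l' : Fin d) :
    ∑ i, (starRingEnd ℂ) (sq4 hA hB hC b i l) * sq4 hA hB hC b i l' = mv4 A B C b l l' := by
  fin_cases b
  · exact sqrt_col_inner hA l l'
  · exact sqrt_col_inner hB l l'
  · exact sqrt_col_inner hC l l'
  · exact absurd rfl hb

lemma sq4_trace (b : Fin 4) (hb : b ≠ 3) :
    ∑ i, ∑ l, sq4 hA hB hC b i l * (starRingEnd ℂ) (sq4 hA hB hC b i l)
      = (mv4 A B C b).trace := by
  fin_cases b
  · exact sqrt_trace hA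
  · exact sqrt_trace hB
  · exact sqrt_trace hC
  · exact absurd rfl hb


lemma mv4_castSucc : ∀ j : Fin 3, mv4 A B C (Fin.castSucc j) = ![A, B, C] j := by
  intro j
  fin_cases j <;> rfl

lemma sqrt_trace_norm {M : Matrix (Fin d) (Fin d) ℂ} (hM : M.PosSemidef) :
    ∑ i, ∑ l, ‖hM.sqrt i l‖ ^ 2 = M.trace.re := by
  have h := congrArg Complex.re (sqrt_trace hM)
  rw [Complex.re_sum] at h
  rw [← h]
  refine Finset.sum_congr rfl fun i _ => ?_
  rw [Complex.re_sum]
  refine Finset.sum_congr rfl fun l _ => ?_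
  rw [Complex.mul_conj]
  simp [Complex.sq_norm]

end Aux

open Polynomial in
theorem stmt11 (d : ℕ) (hd : 1 ≤ d)
    (A B C : Matrix (Fin d) (Fin d) ℂ)
    (hA : A.PosSemidef) (hB : B.PosSemidef) (hC : C.PosSemidef)
    (hbound : lmaxM (A + B + C) ≤ 1 - ((A + B + C).trace).re) :
    (∑ u, ‖purif hA hB hC u‖ ^ 2 = 1) ∧
    ∀ J : Finset (Fin 3), J.Nonempty →
      (ptrace (J.image Fin.castSucc)
          (outer fun f : Fin 4 → Fin (d + 1) => purif hA hB hC (f 0, f 1, f 2, f 3))).charpoly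
        = X ^ ((d + 1) ^ J.card - (d + 1))
          * (X - Polynomial.C (1 - (∑ j ∈ J, ![A, B, C] j).trace))
          * (∑ j ∈ J, ![A, B, C] j).charpoly := by
  classical
  have hS3 : (A + B + C).PosSemidef := (hA.add hB).add hC
  have hr0 : 0 ≤ 1 - ((A + B + C).trace).re := by
    refine le_trans ?_ hbound
    rw [lmaxM, dif_pos hS3.1]
    have hne : Nonempty (Fin d) := ⟨⟨0, hd⟩⟩
    exact le_ciSup_of_le (Set.Finite.bddAbove (Set.finite_range _)) (Classical.arbitrary _)
      (hS3.eigenvalues_nonneg _)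
  constructor
  · -- part (i)
    have key : (∑ u : Fin (d+1) × Fin (d+1) × Fin (d+1) × Fin (d+1), ‖purif hA hB hC u‖ ^ 2)
        = Real.sqrt (1 - ((A + B + C).trace).re) ^ 2
          + ((∑ k : Fin d, ∑ l : Fin d, ‖hC.sqrt k l‖ ^ 2)
          + ((∑ j : Fin d, ∑ l : Fin d, ‖hB.sqrt j l‖ ^ 2)
          + (∑ i : Fin d, ∑ l : Fin d, ‖hA.sqrt i l‖ ^ 2))) := by
      simp only [Fintype.sum_prod_type, Fin.sum_univ_succ, purif, Fin.succ_ne_zero,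
        Complex.norm_real]
      simp [Fin.succ_ne_zero]
      ring
    rw [key, Real.sq_sqrt hr0, sqrt_trace_norm hA, sqrt_trace_norm hB, sqrt_trace_norm hC]
    have : ((A + B + C).trace).re = A.trace.re + B.trace.re + C.trace.re := by
      simp [Matrix.trace_add]
    rw [this]
    ring
  · -- part (ii)
    intro J hJ
    set J' : Finset (Fin 4) := J.image Fin.castSucc with hJ'def
    have hcastne3 : ∀ j : Fin 3, (Fin.castSucc j : Fin 4) ≠ 3 := by
      intro j h
      have h2 : ((Fin.castSucc j : Fin 4) : ℕ) = 3 := by rw [h]; rfl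
      simp only [Fin.coe_castSucc] at h2
      omega
    have h3J : (3 : Fin 4) ∉ J' := by
      simp only [hJ'def, Finset.mem_image]
      rintro ⟨j, _, hj⟩
      exact hcastne3 j hj
    have hmem_ne3 : ∀ b : Fin 4, b ∈ J' → b ≠ 3 := fun b hb h => h3J (h ▸ hb)
    set t3 : {b : Fin 4 // b ∈ J'ᶜ} := ⟨3, Finset.mem_compl.mpr h3J⟩ with ht3
    set S : Matrix (Fin d) (Fin d) ℂ := ∑ j ∈ J, ![A, B, C] j with hSdef
    have hS : S.PosSemidef := by
      rw [hSdef]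
      refine Finset.sum_induction _ _ (fun a b ha hb => ha.add hb) Matrix.PosSemidef.zero ?_
      intro j _
      fin_cases j
      · exact hA
      · exact hB
      · exact hC
    -- the two rectangular matrices
    set Ψ : Matrix ({j : Fin 4 // j ∈ J'} → Fin (d+1)) ({j : Fin 4 // j ∈ J'ᶜ} → Fin (d+1)) ℂ :=
      Matrix.of (fun x z => phi4 hA hB hC (glue J' x z)) with hΨdef
    set U : Matrix (Fin (d+1)) ({j : Fin 4 // j ∈ J'ᶜ} → Fin (d+1)) ℂ :=
      Matrix.of (fun p z =>
        if hp : p = 0 then phi4 hA hB hC (glue J' 0 z)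
        else if z = zpat t3 (z t3) then
          (if hl : z t3 = 0 then 0 else hS.sqrt (p.pred hp) ((z t3).pred hl))
        else 0) with hUdef
    set Dm : Matrix (Fin (d+1)) (Fin (d+1)) ℂ :=
      Matrix.of (fun p q =>
        if p = 0 then (if q = 0 then 1 - S.trace else 0)
        else if hq : q = 0 then 0
        else if hp : p = 0 then 0 else S (p.pred hp) (q.pred hq)) with hDmdef
    -- glue evaluation lemmas
    have hglue_mem : ∀ (x : {j : Fin 4 // j ∈ J'} → Fin (d+1))
        (z : {j : Fin 4 // j ∈ J'ᶜ} → Fin (d+1)) (b : {j : Fin 4 // j ∈ J'}),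
        glue (α := fun _ => Fin (d+1)) J' x z b.1 = x b := by
      intro x z b
      rw [glue, dif_pos b.2]
    have hglue_nmem : ∀ (x : {j : Fin 4 // j ∈ J'} → Fin (d+1))
        (z : {j : Fin 4 // j ∈ J'ᶜ} → Fin (d+1)) (b : {j : Fin 4 // j ∈ J'ᶜ}),
        glue (α := fun _ => Fin (d+1)) J' x z b.1 = z b := by
      intro x z b
      rw [glue, dif_neg (Finset.mem_compl.mp b.2)]
    have hglue1 : ∀ (a : {j : Fin 4 // j ∈ J'}) (i : Fin d) (l : Fin (d+1)),
        glue J' (single1 a i) (zpat t3 l) = e4pat a.1 i.succ l := by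
      intro a i l
      funext b
      by_cases hb : b ∈ J'
      · rw [show b = (⟨b, hb⟩ : {j : Fin 4 // j ∈ J'}).1 from rfl, hglue_mem]
        simp only [single1, e4pat, Subtype.ext_iff]
        by_cases h2 : b = a.1
        · simp [h2]
        · simp [h2, hmem_ne3 b hb]
      · rw [show b = (⟨b, Finset.mem_compl.mpr hb⟩ : {j : Fin 4 // j ∈ J'ᶜ}).1 from rfl,
          hglue_nmem]
        have hba : b ≠ a.1 := fun h => hb (h ▸ a.2)
        simp only [zpat, e4pat, if_neg hba]
        by_cases h3 : b = 3
        · rw [if_pos (Subtype.ext h3 : _ = t3), if_pos h3]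
        · rw [if_neg (fun h => h3 (congrArg Subtype.val h)), if_neg h3]
    have hglue0 : ∀ l : Fin (d+1),
        glue J' (0 : {j : Fin 4 // j ∈ J'} → Fin (d+1)) (zpat t3 l) = z4pat l := by
      intro l
      funext b
      by_cases hb : b ∈ J'
      · rw [show b = (⟨b, hb⟩ : {j : Fin 4 // j ∈ J'}).1 from rfl, hglue_mem]
        simp [z4pat, hmem_ne3 b hb]
      · rw [show b = (⟨b, Finset.mem_compl.mpr hb⟩ : {j : Fin 4 // j ∈ J'ᶜ}).1 from rfl,
          hglue_nmem]
        simp only [zpat, z4pat, ht3, Subtype.ext_iff]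
    have hglue2 : ∀ (w : {j : Fin 4 // j ∈ J'ᶜ}), w ≠ t3 → ∀ (i : Fin d) (l : Fin (d+1)),
        glue J' (0 : {j : Fin 4 // j ∈ J'} → Fin (d+1)) (zpat2 t3 w i l) = e4pat w.1 i.succ l := by
      intro w hw i l
      funext b
      have hw3 : w.1 ≠ 3 := fun h => hw (Subtype.ext h)
      by_cases hb : b ∈ J'
      · have hbw : b ≠ w.1 := fun h => (Finset.mem_compl.mp w.2) (h ▸ hb)
        rw [show b = (⟨b, hb⟩ : {j : Fin 4 // j ∈ J'}).1 from rfl, hglue_mem]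
        simp [e4pat, hbw, hmem_ne3 b hb]
      · rw [show b = (⟨b, Finset.mem_compl.mpr hb⟩ : {j : Fin 4 // j ∈ J'ᶜ}).1 from rfl,
          hglue_nmem]
        simp only [zpat2, e4pat, ht3, Subtype.ext_iff]
    have hzchar : ∀ z : {j : Fin 4 // j ∈ J'ᶜ} → Fin (d+1), z ≠ zpat t3 (z t3) →
        ∃ b : {j : Fin 4 // j ∈ J'ᶜ}, b ≠ t3 ∧ z b ≠ 0 := by
      intro z hz
      by_contra h
      push_neg at h
      apply hz
      funext c
      by_cases hc : c = t3
      · subst hc; simp [zpat]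
      · rw [h c hc]
        simp [zpat, hc]
    -- ρ = Ψ Ψ.conjTranspose
    have hU0 : ∀ w, U 0 w = phi4 hA hB hC (glue J' 0 w) := by
      intro w
      rw [hUdef]
      simp only [Matrix.of_apply]
      simp
    have hUsucc : ∀ (p : Fin d) (w : {j : Fin 4 // j ∈ J'ᶜ} → Fin (d+1)),
        U p.succ w = if w = zpat t3 (w t3) then
          (if hl : w t3 = 0 then 0 else hS.sqrt p ((w t3).pred hl)) else 0 := by
      intro p w
      rw [hUdef]
      simp only [Matrix.of_apply]
      rw [dif_neg (Fin.succ_ne_zero p)]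
      simp only [Fin.pred_succ]
    have hρ : ptrace J' (outer (phi4 hA hB hC)) = Ψ * Ψ.conjTranspose := by
      ext x y
      simp only [ptrace, outer, Matrix.of_apply, Matrix.mul_apply,
        Matrix.conjTranspose_apply, hΨdef, starRingEnd_apply]
    -- E1 : Ψ.conjTranspose Ψ = U.conjTranspose U
    have E1 : Ψ.conjTranspose * Ψ = U.conjTranspose * U := by
      ext z z'
      rw [Matrix.mul_apply, Matrix.mul_apply]
      simp only [Matrix.conjTranspose_apply, hΨdef, Matrix.of_apply, ← starRingEnd_apply]
      have hLHS := sum_pattern1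
        (fun x => (starRingEnd ℂ) (phi4 hA hB hC (glue J' x z)) * phi4 hA hB hC (glue J' x z')) ?_
      · rw [hLHS, Fin.sum_univ_succ]
        beta_reduce
        congr 1
        -- single-pattern terms
        by_cases hz : z = zpat t3 (z t3)
        · by_cases hz' : z' = zpat t3 (z' t3)
          · by_cases hl : z t3 = 0
            · -- first factor always vanishes / RHS vanishes unless both nonzero
              have hLz : ∀ (a : {j : Fin 4 // j ∈ J'}) (i : Fin d),
                  phi4 hA hB hC (glue J' (single1 a i) z) = 0 := by
                intro a i
                conv_lhs => rw [hz]
                rw [hglue1, phi4_e4 hA hB hC a.1 (hmem_ne3 a.1 a.2) i]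
                simp [hl]
              have hRz : ∀ p : Fin d,
                  (starRingEnd ℂ) (U p.succ z) * U p.succ z' = 0 := by
                intro p
                rw [hUsucc, if_pos hz, dif_pos hl, map_zero, zero_mul]
              rw [Finset.sum_eq_zero fun p _ => hRz p,
                Finset.sum_eq_zero fun (a : {j : Fin 4 // j ∈ J'}) _ =>
                  Finset.sum_eq_zero fun i _ => by rw [hLz a i, map_zero, zero_mul]]
            · by_cases hl' : z' t3 = 0
              · have hLz : ∀ (a : {j : Fin 4 // j ∈ J'}) (i : Fin d),
                    phi4 hA hB hC (glue J' (single1 a i) z') = 0 := by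
                  intro a i
                  conv_lhs => rw [hz']
                  rw [hglue1, phi4_e4 hA hB hC a.1 (hmem_ne3 a.1 a.2) i]
                  simp [hl']
                have hRz : ∀ p : Fin d,
                    (starRingEnd ℂ) (U p.succ z) * U p.succ z' = 0 := by
                  intro p
                  rw [hUsucc p z', if_pos hz', dif_pos hl', mul_zero]
                rw [Finset.sum_eq_zero fun p _ => hRz p,
                  Finset.sum_eq_zero fun (a : {j : Fin 4 // j ∈ J'}) _ =>
                    Finset.sum_eq_zero fun i _ => by rw [hLz a i, mul_zero]]
              · -- both nonzero : main case
                have hterm : ∀ (a : {j : Fin 4 // j ∈ J'}) (i : Fin d),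
                    (starRingEnd ℂ) (phi4 hA hB hC (glue J' (single1 a i) z))
                      * phi4 hA hB hC (glue J' (single1 a i) z')
                    = (starRingEnd ℂ) (sq4 hA hB hC a.1 i ((z t3).pred hl))
                      * sq4 hA hB hC a.1 i ((z' t3).pred hl') := by
                  intro a i
                  conv_lhs => rw [hz, hz']
                  rw [hglue1, hglue1, phi4_e4 hA hB hC a.1 (hmem_ne3 a.1 a.2) i,
                    phi4_e4 hA hB hC a.1 (hmem_ne3 a.1 a.2) i]
                  rw [dif_neg hl, dif_neg hl']
                have hRterm : ∀ p : Fin d,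
                    (starRingEnd ℂ) (U p.succ z) * U p.succ z'
                    = (starRingEnd ℂ) (hS.sqrt p ((z t3).pred hl))
                      * hS.sqrt p ((z' t3).pred hl') := by
                  intro p
                  rw [hUsucc p z, hUsucc p z', if_pos hz, if_pos hz',
                    dif_neg hl, dif_neg hl']
                rw [Finset.sum_congr rfl (fun p _ => hRterm p)]
                rw [Finset.sum_congr rfl (fun a _ =>
                  Finset.sum_congr rfl (fun i _ => hterm a i))]
                rw [sqrt_col_inner hS]
                -- LHS : sum over subtype then image
                have hsub : ∑ a : {j : Fin 4 // j ∈ J'}, ∑ i : Fin d,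
                    (starRingEnd ℂ) (sq4 hA hB hC a.1 i ((z t3).pred hl))
                      * sq4 hA hB hC a.1 i ((z' t3).pred hl')
                    = ∑ b ∈ J', ∑ i : Fin d,
                    (starRingEnd ℂ) (sq4 hA hB hC b i ((z t3).pred hl))
                      * sq4 hA hB hC b i ((z' t3).pred hl') :=
                  Finset.sum_coe_sort J' (fun b => ∑ i : Fin d,
                    (starRingEnd ℂ) (sq4 hA hB hC b i ((z t3).pred hl))
                      * sq4 hA hB hC b i ((z' t3).pred hl'))
                rw [hsub, hJ'def,
                  Finset.sum_image (fun a _ b _ h => Fin.castSucc_injective 3 h)]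
                have hper : ∀ j ∈ J,
                    (∑ i : Fin d, (starRingEnd ℂ)
                        (sq4 hA hB hC (Fin.castSucc j) i ((z t3).pred hl))
                      * sq4 hA hB hC (Fin.castSucc j) i ((z' t3).pred hl'))
                    = (![A, B, C] j) ((z t3).pred hl) ((z' t3).pred hl') := by
                  intro j _
                  rw [sq4_inner hA hB hC _ (hcastne3 j), mv4_castSucc]
                rw [Finset.sum_congr rfl hper, hSdef, Matrix.sum_apply]
          · -- z' is not a zpat
            obtain ⟨b, hb3, hbz⟩ := hzchar z' hz'
            have hLz : ∀ (a : {j : Fin 4 // j ∈ J'}) (i : Fin d),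
                phi4 hA hB hC (glue J' (single1 a i) z') = 0 := by
              intro a i
              refine phi4_two_ne hA hB hC _ a.1 b.1
                (fun h => (Finset.mem_compl.mp b.2) (h ▸ a.2))
                (hmem_ne3 a.1 a.2) (fun h => hb3 (Subtype.ext h)) ?_ ?_
              · rw [hglue_mem]
                simp [single1, Fin.succ_ne_zero]
              · rw [hglue_nmem]
                exact hbz
            have hRz : ∀ p : Fin d,
                (starRingEnd ℂ) (U p.succ z) * U p.succ z' = 0 := by
              intro p
              rw [hUsucc p z', if_neg hz', mul_zero]
            rw [Finset.sum_eq_zero fun p _ => hRz p,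
              Finset.sum_eq_zero fun (a : {j : Fin 4 // j ∈ J'}) _ =>
                Finset.sum_eq_zero fun i _ => by rw [hLz a i, mul_zero]]
        · -- z is not a zpat
          obtain ⟨b, hb3, hbz⟩ := hzchar z hz
          have hLz : ∀ (a : {j : Fin 4 // j ∈ J'}) (i : Fin d),
              phi4 hA hB hC (glue J' (single1 a i) z) = 0 := by
            intro a i
            refine phi4_two_ne hA hB hC _ a.1 b.1
              (fun h => (Finset.mem_compl.mp b.2) (h ▸ a.2))
              (hmem_ne3 a.1 a.2) (fun h => hb3 (Subtype.ext h)) ?_ ?_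
            · rw [hglue_mem]
              simp [single1, Fin.succ_ne_zero]
            · rw [hglue_nmem]
              exact hbz
          have hRz : ∀ p : Fin d,
              (starRingEnd ℂ) (U p.succ z) * U p.succ z' = 0 := by
            intro p
            rw [hUsucc p z, if_neg hz, map_zero, zero_mul]
          rw [Finset.sum_eq_zero fun p _ => hRz p,
            Finset.sum_eq_zero fun (a : {j : Fin 4 // j ∈ J'}) _ =>
              Finset.sum_eq_zero fun i _ => by rw [hLz a i, map_zero, zero_mul]]
      · -- support hypothesis for sum_pattern1
        rintro x ⟨a, b, hab, hxa, hxb⟩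
        show (starRingEnd ℂ) (phi4 hA hB hC (glue J' x z)) * phi4 hA hB hC (glue J' x z') = 0
        have : phi4 hA hB hC (glue J' x z) = 0 := by
          refine phi4_two_ne hA hB hC _ a.1 b.1 (fun h => hab (Subtype.ext h))
            (hmem_ne3 a.1 a.2) (hmem_ne3 b.1 b.2) ?_ ?_
          · rw [hglue_mem]; exact hxa
          · rw [hglue_mem]; exact hxb
        rw [this, map_zero, zero_mul]
    have hzpat_t3 : ∀ l : Fin (d+1), (zpat t3 l) t3 = l := fun l => if_pos rfl
    have hUzpat : ∀ (p : Fin d) (l : Fin (d+1)),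
        U p.succ (zpat t3 l) = if hl : l = 0 then 0 else hS.sqrt p (l.pred hl) := by
      intro p l
      rw [hUsucc p (zpat t3 l)]
      simp only [hzpat_t3]
      simp
    have hzp2_ne : ∀ (a : {b : {j : Fin 4 // j ∈ J'ᶜ} // b ≠ t3}) (i : Fin d) (l : Fin (d+1)),
        zpat2 t3 a.1 i l ≠ zpat t3 ((zpat2 t3 a.1 i l) t3) := by
      intro a i l h
      have := congrFun h a.1
      simp only [zpat2, zpat, if_pos rfl, if_neg a.2] at this
      exact Fin.succ_ne_zero i this
    have E2 : U * U.conjTranspose = Dm := by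
      ext p q
      rw [Matrix.mul_apply]
      simp only [Matrix.conjTranspose_apply, ← starRingEnd_apply]
      rcases Fin.eq_zero_or_eq_succ p with hp | ⟨p', hp⟩
      · rcases Fin.eq_zero_or_eq_succ q with hq | ⟨q', hq⟩
        · subst hp hq
          have hDm00 : Dm 0 0 = 1 - S.trace := by rw [hDmdef]; simp
          rw [hDm00]
          have hterm : ∀ w, U 0 w * (starRingEnd ℂ) (U 0 w)
              = phi4 hA hB hC (glue J' 0 w)
                * (starRingEnd ℂ) (phi4 hA hB hC (glue J' 0 w)) := fun w => by rw [hU0]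
          rw [Finset.sum_congr rfl fun w _ => hterm w]
          have hmain := sum_pattern2 t3 (fun w => phi4 hA hB hC (glue J' 0 w)
              * (starRingEnd ℂ) (phi4 hA hB hC (glue J' 0 w))) ?_
          · rw [hmain]
            have hsum1 : (∑ l, phi4 hA hB hC (glue J' 0 (zpat t3 l))
                  * (starRingEnd ℂ) (phi4 hA hB hC (glue J' 0 (zpat t3 l))))
                = ((1 - ((A + B + C).trace).re : ℝ) : ℂ) := by
              rw [Fin.sum_univ_succ]
              have h0 : phi4 hA hB hC (glue J' 0 (zpat t3 0))
                  = (Real.sqrt (1 - ((A + B + C).trace).re) : ℂ) := by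
                rw [hglue0, phi4_z4, if_pos rfl]
              have hsucc : ∀ i : Fin d, phi4 hA hB hC (glue J' 0 (zpat t3 i.succ)) = 0 := by
                intro i
                rw [hglue0, phi4_z4, if_neg (Fin.succ_ne_zero i)]
              rw [h0, Finset.sum_eq_zero fun i _ => by rw [hsucc i, zero_mul], add_zero,
                Complex.conj_ofReal, ← Complex.ofReal_mul,
                Real.mul_self_sqrt hr0]
            have h2 : ∀ (a : {b : {j : Fin 4 // j ∈ J'ᶜ} // b ≠ t3}),
                (∑ i : Fin d, ∑ l, phi4 hA hB hC (glue J' 0 (zpat2 t3 a.1 i l))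
                  * (starRingEnd ℂ) (phi4 hA hB hC (glue J' 0 (zpat2 t3 a.1 i l))))
                = (mv4 A B C a.1.1).trace := by
              intro a
              have hna : a.1.1 ≠ 3 := fun h => a.2 (Subtype.ext h)
              have hterm2 : ∀ (i : Fin d) (l : Fin (d+1)),
                  phi4 hA hB hC (glue J' 0 (zpat2 t3 a.1 i l))
                  = if hl : l = 0 then 0 else sq4 hA hB hC a.1.1 i (l.pred hl) := by
                intro i l
                rw [hglue2 a.1 a.2 i l, phi4_e4 hA hB hC a.1.1 hna i l]
              rw [← sq4_trace hA hB hC a.1.1 hna]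
              refine Finset.sum_congr rfl fun i _ => ?_
              rw [Fin.sum_univ_succ]
              have hz0 : phi4 hA hB hC (glue J' 0 (zpat2 t3 a.1 i 0)) = 0 := by
                rw [hterm2 i 0]
                simp
              rw [hz0, zero_mul, zero_add]
              refine Finset.sum_congr rfl fun l _ => ?_
              rw [hterm2 i l.succ, dif_neg (Fin.succ_ne_zero l), Fin.pred_succ]
            rw [hsum1, Finset.sum_congr rfl fun a _ => h2 a]
            have hGstep : (∑ a : {b : {j : Fin 4 // j ∈ J'ᶜ} // b ≠ t3}, (mv4 A B C a.1.1).trace)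
                = ∑ j ∈ Jᶜ, (![A, B, C] j).trace := by
              set G' : Fin 4 → ℂ := fun b => if b = 3 then 0 else (mv4 A B C b).trace with hG'
              have hGa : ∀ a : {b : {j : Fin 4 // j ∈ J'ᶜ} // b ≠ t3},
                  (mv4 A B C a.1.1).trace = G' a.1.1 := by
                intro a
                rw [hG']
                exact (if_neg (fun h => a.2 (Subtype.ext h))).symm
              rw [Finset.sum_congr rfl fun a _ => hGa a]
              have hst : (∑ a : {b : {j : Fin 4 // j ∈ J'ᶜ} // b ≠ t3}, G' a.1.1)
                  = ∑ b ∈ (Finset.univ.erase t3), G' b.1 :=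
                (Finset.sum_subtype (Finset.univ.erase t3) (fun x => by simp)
                  (fun b : {j : Fin 4 // j ∈ J'ᶜ} => G' b.1)).symm
              have hGt3 : G' (t3.1) = 0 := by
                show G' 3 = 0
                rw [hG']
                simp
              rw [hst, Finset.sum_erase (f := fun b : {j : Fin 4 // j ∈ J'ᶜ} => G' b.1)
                Finset.univ hGt3, Finset.sum_coe_sort J'ᶜ G']
              have h3nimg : (3 : Fin 4) ∉ Jᶜ.image Fin.castSucc := by
                simp only [Finset.mem_image]
                rintro ⟨j, _, hj⟩
                exact hcastne3 j hj
              have hJc : J'ᶜ = insert (3 : Fin 4) (Jᶜ.image Fin.castSucc) := by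
                ext b
                simp only [Finset.mem_compl, hJ'def, Finset.mem_insert, Finset.mem_image]
                constructor
                · intro hb
                  rcases Fin.eq_castSucc_or_eq_last b with ⟨j, rfl⟩ | h
                  · refine Or.inr ⟨j, ?_, rfl⟩
                    intro hj
                    exact hb ⟨j, hj, rfl⟩
                  · exact Or.inl (by rw [h]; rfl)
                · rintro (rfl | ⟨j, hj, rfl⟩)
                  · rintro ⟨j, _, hj⟩
                    exact hcastne3 j hj
                  · rintro ⟨j', hj', hje⟩
                    exact hj (Fin.castSucc_injective 3 hje ▸ hj')
              rw [hJc, Finset.sum_insert h3nimg, hGt3, zero_add,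
                Finset.sum_image (fun a _ b _ h => Fin.castSucc_injective 3 h)]
              refine Finset.sum_congr rfl fun j _ => ?_
              rw [hG']
              show (if Fin.castSucc j = 3 then 0 else (mv4 A B C (Fin.castSucc j)).trace) = _
              rw [if_neg (hcastne3 j), mv4_castSucc]
            rw [hGstep]
            have hofr : ((1 - ((A + B + C).trace).re : ℝ) : ℂ) = 1 - (A + B + C).trace := by
              rw [Complex.ofReal_sub, Complex.ofReal_one, trace_re_psd hS3]
            rw [hofr]
            have htrS : S.trace = ∑ j ∈ J, (![A, B, C] j).trace := by
              rw [hSdef, Matrix.trace_sum]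
            have htr3 : (A + B + C).trace = ∑ j : Fin 3, (![A, B, C] j).trace := by
              rw [Fin.sum_univ_three]
              simp [Matrix.trace_add]
            rw [htrS, htr3, ← Finset.sum_add_sum_compl J (fun j => (![A, B, C] j).trace)]
            ring
          · rintro w ⟨a, b, hab, ha3, hb3, hwa, hwb⟩
            show phi4 hA hB hC (glue J' 0 w)
              * (starRingEnd ℂ) (phi4 hA hB hC (glue J' 0 w)) = 0
            have : phi4 hA hB hC (glue J' 0 w) = 0 := by
              refine phi4_two_ne hA hB hC _ a.1 b.1 (fun h => hab (Subtype.ext h))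
                (fun h => ha3 (Subtype.ext h)) (fun h => hb3 (Subtype.ext h)) ?_ ?_
              · rw [hglue_nmem]; exact hwa
              · rw [hglue_nmem]; exact hwb
            rw [this, zero_mul]
        · subst hp hq
          have hDm : Dm 0 q'.succ = 0 := by
            rw [hDmdef]
            simp [Fin.succ_ne_zero]
          rw [hDm]
          refine Finset.sum_eq_zero fun z _ => ?_
          by_cases hz : z = zpat t3 (z t3)
          · by_cases hl : z t3 = 0
            · rw [hUsucc q' z, if_pos hz, dif_pos hl, map_zero, mul_zero]
            · have hU0z : U 0 z = 0 := by
                rw [hU0]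
                conv_lhs => rw [hz]
                rw [hglue0, phi4_z4, if_neg hl]
              rw [hU0z, zero_mul]
          · rw [hUsucc q' z, if_neg hz, map_zero, mul_zero]
      · rcases Fin.eq_zero_or_eq_succ q with hq | ⟨q', hq⟩
        · subst hp hq
          have hDm : Dm p'.succ 0 = 0 := by
            rw [hDmdef]
            simp [Fin.succ_ne_zero]
          rw [hDm]
          refine Finset.sum_eq_zero fun z _ => ?_
          by_cases hz : z = zpat t3 (z t3)
          · by_cases hl : z t3 = 0
            · rw [hUsucc p' z, if_pos hz, dif_pos hl, zero_mul]
            · have hU0z : U 0 z = 0 := by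
                rw [hU0]
                conv_lhs => rw [hz]
                rw [hglue0, phi4_z4, if_neg hl]
              rw [hU0z, map_zero, mul_zero]
          · rw [hUsucc p' z, if_neg hz, zero_mul]
        · subst hp hq
          have hDm : Dm p'.succ q'.succ = S p' q' := by
            rw [hDmdef]
            simp [Fin.succ_ne_zero, Fin.pred_succ]
          rw [hDm]
          have hmain := sum_pattern2 t3 (fun w => U p'.succ w * (starRingEnd ℂ) (U q'.succ w)) ?_
          · rw [hmain]
            have hz2 : (∑ a : {b : {j : Fin 4 // j ∈ J'ᶜ} // b ≠ t3}, ∑ i : Fin d, ∑ l,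
                U p'.succ (zpat2 t3 a.1 i l)
                  * (starRingEnd ℂ) (U q'.succ (zpat2 t3 a.1 i l))) = 0 :=
              Finset.sum_eq_zero fun a _ => Finset.sum_eq_zero fun i _ =>
                Finset.sum_eq_zero fun l _ => by
                  rw [hUsucc p' _, if_neg (hzp2_ne a i l), zero_mul]
            rw [hz2, add_zero, Fin.sum_univ_succ]
            have hz0 : U p'.succ (zpat t3 0) * (starRingEnd ℂ) (U q'.succ (zpat t3 0)) = 0 := by
              rw [hUzpat p' 0, dif_pos rfl, zero_mul]
            rw [hz0, zero_add]
            have hterm : ∀ l : Fin d,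
                U p'.succ (zpat t3 l.succ) * (starRingEnd ℂ) (U q'.succ (zpat t3 l.succ))
                = hS.sqrt p' l * (starRingEnd ℂ) (hS.sqrt q' l) := by
              intro l
              rw [hUzpat p' l.succ, hUzpat q' l.succ, dif_neg (Fin.succ_ne_zero l),
                dif_neg (Fin.succ_ne_zero l), Fin.pred_succ]
            rw [Finset.sum_congr rfl fun l _ => hterm l, sqrt_row_inner hS p' q']
          · rintro w ⟨a, b, hab, ha3, hb3, hwa, hwb⟩
            show U p'.succ w * (starRingEnd ℂ) (U q'.succ w) = 0
            have hwne : w ≠ zpat t3 (w t3) := by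
              intro h
              have := congrFun h a
              simp only [zpat, if_neg ha3] at this
              exact hwa this
            rw [hUsucc p' w, if_neg hwne, zero_mul]
    have hDchar : Dm.charpoly = (X - Polynomial.C (1 - S.trace)) * S.charpoly := by
      have hDm_ss : ∀ i j : Fin d, Dm i.succ j.succ = S i j := by
        intro i j
        rw [hDmdef]
        simp [Fin.succ_ne_zero, Fin.pred_succ]
      have hDm_row : ∀ j : Fin d, Dm 0 j.succ = 0 := by
        intro j
        rw [hDmdef]
        simp [Fin.succ_ne_zero]
      have hDm00 : Dm 0 0 = 1 - S.trace := by
        rw [hDmdef]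
        simp
      have hsubm : (Matrix.charmatrix Dm).submatrix Fin.succ ((0 : Fin (d+1)).succAbove)
          = Matrix.charmatrix S := by
        ext i j
        rw [Matrix.submatrix_apply, Fin.zero_succAbove]
        by_cases h : i = j
        · subst h
          rw [Matrix.charmatrix_apply_eq, Matrix.charmatrix_apply_eq, hDm_ss]
        · rw [Matrix.charmatrix_apply_ne _ _ _ (fun hh => h (Fin.succ_injective _ hh)),
            Matrix.charmatrix_apply_ne _ _ _ h, hDm_ss]
      rw [Matrix.charpoly, Matrix.det_succ_row_zero, Fin.sum_univ_succ]
      have hzrow : ∀ j : Fin d,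
          (-1 : Polynomial ℂ) ^ (((j.succ : Fin (d+1)) : ℕ)) * Matrix.charmatrix Dm 0 j.succ
            * ((Matrix.charmatrix Dm).submatrix Fin.succ ((j.succ : Fin (d+1)).succAbove)).det
              = 0 := by
        intro j
        rw [Matrix.charmatrix_apply_ne _ _ _ (Fin.succ_ne_zero j).symm, hDm_row]
        simp
      rw [Finset.sum_eq_zero fun j _ => hzrow j, add_zero, hsubm,
        Matrix.charmatrix_apply_eq, hDm00]
      simp [Matrix.charpoly]
    have key1 := charpoly_pow_mul_comm Ψ Ψ.conjTranspose
    have key2 := charpoly_pow_mul_comm U U.conjTranspose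
    rw [E1] at key1
    rw [E2] at key2
    rw [Fintype.card_fin] at key2
    have hcX : Fintype.card ({j : Fin 4 // j ∈ J'} → Fin (d+1)) = (d+1) ^ J.card := by
      rw [Fintype.card_fun, Fintype.card_fin, Fintype.card_coe, hJ'def,
        Finset.card_image_of_injective _ (Fin.castSucc_injective 3)]
    rw [hcX] at key1
    have hk : 1 ≤ J.card := hJ.card_pos
    have hle : d + 1 ≤ (d+1) ^ J.card := Nat.le_self_pow (by omega) _
    show (ptrace J' (outer (phi4 hA hB hC))).charpoly = _
    rw [hρ]
    refine mul_left_cancel₀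
      (pow_ne_zero ((d+1) + Fintype.card ({j : Fin 4 // j ∈ J'ᶜ} → Fin (d+1)))
        (Polynomial.X_ne_zero (R := ℂ))) ?_
    calc X ^ ((d+1) + Fintype.card ({j : Fin 4 // j ∈ J'ᶜ} → Fin (d+1)))
          * (Ψ * Ψ.conjTranspose).charpoly
        = X ^ (d+1) * (X ^ Fintype.card ({j : Fin 4 // j ∈ J'ᶜ} → Fin (d+1))
            * (Ψ * Ψ.conjTranspose).charpoly) := by
          rw [pow_add, mul_assoc]
      _ = X ^ (d+1) * (X ^ ((d+1) ^ J.card) * (U.conjTranspose * U).charpoly) := by rw [key1]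
      _ = X ^ ((d+1) ^ J.card) * (X ^ (d+1) * (U.conjTranspose * U).charpoly) := by ring
      _ = X ^ ((d+1) ^ J.card) * (X ^ Fintype.card ({j : Fin 4 // j ∈ J'ᶜ} → Fin (d+1))
            * Dm.charpoly) := by rw [← key2]
      _ = X ^ ((d+1) ^ J.card + Fintype.card ({j : Fin 4 // j ∈ J'ᶜ} → Fin (d+1)))
            * ((X - Polynomial.C (1 - S.trace)) * S.charpoly) := by
          rw [hDchar, pow_add, mul_assoc]
      _ = X ^ ((d+1) + Fintype.card ({j : Fin 4 // j ∈ J'ᶜ} → Fin (d+1)))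
            * (X ^ ((d + 1) ^ J.card - (d + 1)) * (X - Polynomial.C (1 - S.trace))
              * S.charpoly) := by
          rw [show (d+1) ^ J.card + Fintype.card ({j : Fin 4 // j ∈ J'ᶜ} → Fin (d+1))
              = ((d+1) + Fintype.card ({j : Fin 4 // j ∈ J'ᶜ} → Fin (d+1)))
                + ((d + 1) ^ J.card - (d + 1)) from by omega, pow_add]
          ring
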